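/- Adopt the Newton-step setup: n ≥ 1, H̃ ∈ ℝ^{n×n} symmetric positive semidefinite, λ > 0, Ω = [I, −I] ∈ ℝ^{n×2n}, vectors v, s ∈ ℝ^{2n} with all components positive, β = √(vs), τ > 0, and (Δz, Δv, Δs) ∈ ℝ^n × ℝ^{2n} × ℝ^{2n} satisfying 2λH̃Δz + ΩΔv = 0, ΩᵀΔz + Δs = 0, and √(s/v)Δv + √(v/s)Δs = 2(τe − √(vs)). If the proximity measure ξ(β,τ) = ‖τe − β‖/τ satisfies ξ(β,τ) < 1, then the full Newton step is strictly feasible: v + Δv > 0 and s + Δs > 0 componentwise. -/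

import Mathlib

open Matrix Finset

/-- strict feasibility of the full Newton step. In the Newton-step setup with
`Ω = [I, −I]`, if the proximity measure `ξ(β,τ) = ‖τe − β‖/τ < 1` (Euclidean norm),
then `v + Δv > 0` and `s + Δs > 0` componentwise. -/
theorem full_newton_step_strictly_feasible {n : ℕ} (hn : 1 ≤ n)
    (Htil : Matrix (Fin n) (Fin n) ℝ) (hH : Htil.PosSemidef)
    (lam : ℝ) (hlam : 0 < lam)
    (Ω : Matrix (Fin n) (Fin n ⊕ Fin n) ℝ)
    (hΩ : Ω = Matrix.fromCols (1 : Matrix (Fin n) (Fin n) ℝ)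
      (-(1 : Matrix (Fin n) (Fin n) ℝ)))
    (v s : Fin n ⊕ Fin n → ℝ) (hv : ∀ i, 0 < v i) (hs : ∀ i, 0 < s i)
    (β : Fin n ⊕ Fin n → ℝ) (hβ : β = fun i => Real.sqrt (v i * s i))
    (τ : ℝ) (hτ : 0 < τ)
    (Δz : Fin n → ℝ) (Δv Δs : Fin n ⊕ Fin n → ℝ)
    (heq1 : (2 * lam) • Htil.mulVec Δz + Ω.mulVec Δv = 0)
    (heq2 : Ωᵀ.mulVec Δz + Δs = 0)
    (heq3 : ∀ i, Real.sqrt (s i / v i) * Δv i + Real.sqrt (v i / s i) * Δs i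
        = 2 * (τ - Real.sqrt (v i * s i)))
    (hξ : Real.sqrt (∑ i, (τ - β i) ^ 2) / τ < 1) :
    (∀ i, 0 < v i + Δv i) ∧ (∀ i, 0 < s i + Δs i) := by
  subst hβ
  set a : Fin n ⊕ Fin n → ℝ := fun i => Real.sqrt (s i / v i) * Δv i with ha
  set b : Fin n ⊕ Fin n → ℝ := fun i => Real.sqrt (v i / s i) * Δs i with hb
  set q : Fin n ⊕ Fin n → ℝ := fun i => τ - Real.sqrt (v i * s i) with hq
  set σ : ℝ := ∑ i, q i ^ 2 with hσ
  have hβpos : ∀ i, 0 < Real.sqrt (v i * s i) := fun i =>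
    Real.sqrt_pos.mpr (mul_pos (hv i) (hs i))
  have hsvvs : ∀ i, Real.sqrt (s i / v i) * Real.sqrt (v i / s i) = 1 := by
    intro i
    rw [← Real.sqrt_mul (div_pos (hs i) (hv i)).le, div_mul_div_comm,
      mul_comm (s i) (v i), div_self (mul_pos (hv i) (hs i)).ne', Real.sqrt_one]
  have hab : ∀ i, a i * b i = Δv i * Δs i := by
    intro i
    have h := hsvvs i
    simp only [ha, hb]
    linear_combination Δv i * Δs i * h
  have hΔs : Δs = -(Ωᵀ.mulVec Δz) := by
    funext i
    have h := congrFun heq2 i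
    simp only [Pi.add_apply, Pi.zero_apply, Pi.neg_apply] at h ⊢
    linarith
  have hΩΔv : Ω.mulVec Δv = -((2 * lam) • Htil.mulVec Δz) := by
    funext i
    have h := congrFun heq1 i
    simp only [Pi.add_apply, Pi.zero_apply, Pi.neg_apply, Pi.smul_apply, smul_eq_mul] at h ⊢
    linarith
  have hsum : 0 ≤ ∑ i, Δv i * Δs i := by
    have h1 : (∑ i, Δv i * Δs i) = Δv ⬝ᵥ Δs := rfl
    have h2 : 0 ≤ Δz ⬝ᵥ Htil.mulVec Δz := by simpa using hH.dotProduct_mulVec_nonneg Δz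
    rw [h1, hΔs, dotProduct_neg, dotProduct_mulVec, vecMul_transpose, hΩΔv,
      neg_dotProduct, smul_dotProduct, neg_neg, smul_eq_mul, dotProduct_comm]
    positivity
  have hsumab : 0 ≤ ∑ i, a i * b i := by
    rw [Finset.sum_congr rfl (fun i _ => hab i)]; exact hsum
  have hsum3 : ∀ i, a i + b i = 2 * q i := fun i => heq3 i
  have habq : ∀ i, a i * b i ≤ q i ^ 2 := by
    intro i
    have hbi : b i = 2 * q i - a i := by linarith [hsum3 i]
    rw [hbi]
    nlinarith [sq_nonneg (a i - q i)]
  have hσnn : 0 ≤ σ := Finset.sum_nonneg fun i _ => sq_nonneg _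
  have hστ : σ < τ ^ 2 := by
    have h1 : Real.sqrt σ < τ := (div_lt_one hτ).mp hξ
    nlinarith [Real.sq_sqrt hσnn, Real.sqrt_nonneg σ]
  have hkey : ∀ i, q i ^ 2 - a i * b i ≤ σ := by
    intro i
    have h6 : ∑ j, a j * b j = a i * b i + ∑ j ∈ univ.erase i, a j * b j :=
      (Finset.add_sum_erase _ _ (mem_univ i)).symm
    have h7 : ∑ j ∈ univ.erase i, a j * b j ≤ ∑ j ∈ univ.erase i, q j ^ 2 :=
      Finset.sum_le_sum fun j _ => habq j
    have h8 : σ = q i ^ 2 + ∑ j ∈ univ.erase i, q j ^ 2 :=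
      (Finset.add_sum_erase _ _ (mem_univ i)).symm
    linarith [hsumab, h6 ▸ hsumab]
  -- per-component strict positivity of β i + a i and β i + b i
  have hpos : ∀ i, 0 < Real.sqrt (v i * s i) + a i ∧ 0 < Real.sqrt (v i * s i) + b i := by
    intro i
    have hbi : b i = 2 * q i - a i := by linarith [hsum3 i]
    have h1 : (a i - q i) ^ 2 = q i ^ 2 - a i * b i := by rw [hbi]; ring
    have h2 : (a i - q i) ^ 2 < τ ^ 2 := by
      calc (a i - q i) ^ 2 = q i ^ 2 - a i * b i := h1
      _ ≤ σ := hkey i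
      _ < τ ^ 2 := hστ
    have h3 : (b i - q i) ^ 2 < τ ^ 2 := by
      have : (b i - q i) ^ 2 = (a i - q i) ^ 2 := by rw [hbi]; ring
      rw [this]; exact h2
    have hqi : q i = τ - Real.sqrt (v i * s i) := rfl
    constructor
    · nlinarith [sq_nonneg (a i - q i + τ)]
    · nlinarith [sq_nonneg (b i - q i + τ)]
  constructor
  · intro i
    have hkey2 : v i + Δv i = Real.sqrt (v i / s i) * (Real.sqrt (v i * s i) + a i) := by
      have hvs : Real.sqrt (v i / s i) * Real.sqrt (v i * s i) = v i := by
        rw [← Real.sqrt_mul (div_pos (hv i) (hs i)).le,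
          show v i / s i * (v i * s i) = v i ^ 2 by field_simp [(hs i).ne'],
          Real.sqrt_sq (hv i).le]
      have hvsa : Real.sqrt (v i / s i) * a i = Δv i := by
        simp only [ha]
        calc Real.sqrt (v i / s i) * (Real.sqrt (s i / v i) * Δv i)
            = (Real.sqrt (s i / v i) * Real.sqrt (v i / s i)) * Δv i := by ring
        _ = Δv i := by rw [hsvvs i]; ring
      rw [mul_add, hvs, hvsa]
    rw [hkey2]
    exact mul_pos (Real.sqrt_pos.mpr (div_pos (hv i) (hs i))) (hpos i).1
  · intro i
    have hkey2 : s i + Δs i = Real.sqrt (s i / v i) * (Real.sqrt (v i * s i) + b i) := by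
      have hvs : Real.sqrt (s i / v i) * Real.sqrt (v i * s i) = s i := by
        rw [← Real.sqrt_mul (div_pos (hs i) (hv i)).le,
          show s i / v i * (v i * s i) = s i ^ 2 by field_simp [(hv i).ne'],
          Real.sqrt_sq (hs i).le]
      have hvsb : Real.sqrt (s i / v i) * b i = Δs i := by
        simp only [hb]
        calc Real.sqrt (s i / v i) * (Real.sqrt (v i / s i) * Δs i)
            = (Real.sqrt (s i / v i) * Real.sqrt (v i / s i)) * Δs i := by ring
        _ = Δs i := by rw [hsvvs i]; ring
      rw [mul_add, hvs, hvsb]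
    rw [hkey2]
    exact mul_pos (Real.sqrt_pos.mpr (div_pos (hs i) (hv i))) (hpos i).2
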